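/- Let G be a Hausdorff topological group and let T, E ⊆ G be nowhere dense subsets with T locally cofinite at 0. Then E + T is nowhere dense in G. -/

import Mathlib

open Pointwise

lemma aux_interior_biUnion_empty {X : Type*} [TopologicalSpace X] {ι : Type*} {S : Set ι}
    (hS : S.Finite) (f : ι → Set X) (hcl : ∀ i ∈ S, IsClosed (f i))
    (hint : ∀ i ∈ S, interior (f i) = ∅) : interior (⋃ i ∈ S, f i) = ∅ := by
  revert hcl hint
  refine Set.Finite.induction_on (motive := fun S _ => (∀ i ∈ S, IsClosed (f i)) →
    (∀ i ∈ S, interior (f i) = ∅) → interior (⋃ i ∈ S, f i) = ∅) S hS (by simp) ?_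
  intro a s _ _ ih hcl hint
  rw [Set.biUnion_insert,
    interior_union_isClosed_of_interior_empty (hcl a (Set.mem_insert a s))
      (ih (fun i hi => hcl i (Set.mem_insert_of_mem a hi))
        (fun i hi => hint i (Set.mem_insert_of_mem a hi)))]
  exact hint a (Set.mem_insert a s)

def LCF0 {G : Type*} [AddGroup G] [TopologicalSpace G] (T : Set G) : Prop :=
  (0 : G) ∉ T ∧ ∀ u : Set G, IsOpen u → (0 : G) ∈ u → (T \ u).Finite

theorem stmt_6 {G : Type*} [AddGroup G] [TopologicalSpace G] [IsTopologicalAddGroup G]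
    [T2Space G] (T E : Set G) (hTnwd : IsNowhereDense T) (hEnwd : IsNowhereDense E)
    (hT : LCF0 T) : IsNowhereDense (E + T) := by
  set F := closure E with hF
  have hFclosed : IsClosed F := isClosed_closure
  have hFint : interior F = ∅ := hEnwd
  rw [IsNowhereDense, Set.eq_empty_iff_forall_notMem]
  intro x hx
  set U := interior (closure (E + T)) with hU
  have hUopen : IsOpen U := isOpen_interior
  -- find a point of U outside F
  have hUF : (U \ F).Nonempty := by
    by_contra h
    rw [Set.not_nonempty_iff_eq_empty, Set.diff_eq_empty] at h
    have : U ⊆ interior F := interior_maximal h hUopen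
    rw [hFint] at this
    exact this hx
  obtain ⟨y, hyU, hyF⟩ := hUF
  -- continuity of subtraction at (y,0), landing in Fᶜ
  have hc : Continuous fun p : G × G => p.1 - p.2 := continuous_sub
  have hpre : IsOpen ((fun p : G × G => p.1 - p.2) ⁻¹' Fᶜ) :=
    hFclosed.isOpen_compl.preimage hc
  have hmem : (y, (0 : G)) ∈ (fun p : G × G => p.1 - p.2) ⁻¹' Fᶜ := by
    simpa using hyF
  obtain ⟨V, u, hVopen, huopen, hyV, h0u, hVu⟩ :=
    isOpen_prod_iff.mp hpre y 0 hmem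
  have hVu' : ∀ v ∈ V, ∀ t ∈ u, v - t ∉ F := fun v hv t ht =>
    hVu (Set.mk_mem_prod hv ht)
  -- S finite
  have hS : (T \ u).Finite := hT.2 u huopen h0u
  set K : Set G := ⋃ t ∈ T \ u, (· + t) '' F with hK
  have hKclosed : IsClosed K :=
    hS.isClosed_biUnion fun t _ =>
      (Homeomorph.addRight t).isClosedMap _ hFclosed
  have hKint : interior K = ∅ := by
    refine aux_interior_biUnion_empty hS _
      (fun t _ => (Homeomorph.addRight t).isClosedMap _ hFclosed) fun t _ => ?_
    have h1 : (· + t) '' F = (Homeomorph.addRight t) '' F := rfl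
    rw [h1, ← Homeomorph.image_interior, hFint, Set.image_empty]
  -- W := (V ∩ U) \ K nonempty open
  set W : Set G := (V ∩ U) \ K with hW
  have hWopen : IsOpen W := ((hVopen.inter hUopen)).sdiff hKclosed
  have hWne : W.Nonempty := by
    by_contra h
    rw [Set.not_nonempty_iff_eq_empty, Set.diff_eq_empty] at h
    have : V ∩ U ⊆ interior K :=
      interior_maximal h (hVopen.inter hUopen)
    rw [hKint] at this
    exact this ⟨hyV, hyU⟩
  -- W disjoint from E + T
  have hdisj : Disjoint W (E + T) := by
    rw [Set.disjoint_left]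
    rintro w ⟨⟨hwV, _⟩, hwK⟩ ⟨e, he, t, ht, rfl⟩
    by_cases htu : t ∈ u
    · exact hVu' _ hwV t htu (by simpa using subset_closure he)
    · exact hwK (Set.mem_biUnion ⟨ht, htu⟩ ⟨e, subset_closure he, rfl⟩)
  -- but W ⊆ closure (E + T), contradiction
  have hWsub : W ⊆ closure (E + T) := fun w hw =>
    interior_subset hw.1.2
  obtain ⟨w, hw⟩ := hWne
  have : w ∉ closure (E + T) := by
    have hsub : E + T ⊆ Wᶜ := fun a ha =>
      fun haW => (Set.disjoint_left.mp hdisj haW) ha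
    have := closure_minimal hsub hWopen.isClosed_compl
    exact fun hc => this hc hw
  exact this (hWsub hw)
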